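/- Let p be a prime and A a ℤ/pℤ-graded commutative ring with components A_i such that A_i·A_{p−i} = A_0 for each i = 1, …, p−1. Then each component A_i is a finitely generated projective A_0-module, and A is a faithfully flat A_0-module. -/

import Mathlib

section GradedSetup

variable {A : Type*} [CommRing A] {p : ℕ}
variable (𝒜 : ZMod p → Submodule ℤ A) [GradedRing 𝒜]

/-- Each component `𝒜 i` is a module over the degree-zero subring `𝒜 0`,
with scalar multiplication induced by the ring multiplication. -/
instance gradeZeroModule (i : ZMod p) : Module (𝒜 (0 : ZMod p)) (𝒜 i) where
  smul r x := ⟨(r : A) * (x : A), by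
    have h := SetLike.mul_mem_graded r.2 x.2
    rwa [zero_add] at h⟩
  one_smul x := Subtype.ext (one_mul _)
  mul_smul r s x := Subtype.ext (mul_assoc _ _ _)
  smul_zero r := Subtype.ext (mul_zero _)
  smul_add r x y := Subtype.ext (mul_add _ _ _)
  add_smul r s x := Subtype.ext (add_mul _ _ _)
  zero_smul x := Subtype.ext (zero_mul _)

/-- The inclusion of the degree-zero subring `𝒜 0` into `A`, as a ring homomorphism. -/
def gradeZeroInclusion : (𝒜 (0 : ZMod p)) →+* A where
  toFun x := x
  map_one' := rfl
  map_mul' _ _ := rfl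
  map_zero' := rfl
  map_add' _ _ := rfl

/-- `A` is an algebra (in particular a module) over its degree-zero subring `𝒜 0`. -/
noncomputable instance : Algebra (𝒜 (0 : ZMod p)) A := (gradeZeroInclusion 𝒜).toAlgebra

end GradedSetup

/- ### Auxiliary lemmas -/

lemma exists_dual_family' {A : Type*} [CommRing A] (M N : Submodule ℤ A) {a : A}
    (ha : a ∈ M * N) :
    ∃ (n : ℕ) (x y : Fin n → A), (∀ j, x j ∈ M) ∧ (∀ j, y j ∈ N) ∧ ∑ j, x j * y j = a := by
  refine Submodule.mul_induction_on ha ?_ ?_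
  · intro m hm n hn
    exact ⟨1, fun _ => m, fun _ => n, fun _ => hm, fun _ => hn, by simp⟩
  · rintro a b ⟨n, x, y, hx, hy, hs⟩ ⟨m, x', y', hx', hy', hs'⟩
    refine ⟨n + m, Fin.append x x', Fin.append y y', ?_, ?_, ?_⟩
    · exact fun j => Fin.addCases (fun j => by simp [hx]) (fun j => by simp [hx']) j
    · exact fun j => Fin.addCases (fun j => by simp [hy]) (fun j => by simp [hy']) j
    · rw [Fin.sum_univ_add]
      simp [hs, hs']

section AuxGraded

variable {A : Type*} [CommRing A] {p : ℕ}
variable {𝒜 : ZMod p → Submodule ℤ A} [GradedRing 𝒜]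

set_option synthInstance.maxHeartbeats 1000000 in
lemma finite_projective_of_dual' (i : ZMod p) (n : ℕ) (x y : Fin n → A)
    (hx : ∀ j, x j ∈ 𝒜 i) (hy : ∀ j, y j ∈ 𝒜 (-i)) (hsum : ∑ j, x j * y j = 1) :
    Module.Finite (𝒜 (0 : ZMod p)) (𝒜 i) ∧ Module.Projective (𝒜 (0 : ZMod p)) (𝒜 i) := by
  set R := 𝒜 (0 : ZMod p)
  have hcoe : ∀ (c s : R), ((c • s : R) : A) = (c : A) * (s : A) := fun _ _ => rfl
  have hsmul : ∀ (c : R) (a : 𝒜 i), ((c • a : 𝒜 i) : A) = (c : A) * (a : A) := fun _ _ => rfl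
  have hmem : ∀ (j : Fin n) (a : 𝒜 i), y j * (a : A) ∈ R := fun j a => by
    have := SetLike.mul_mem_graded (hy j) a.2
    rwa [neg_add_cancel] at this
  have hmem' : ∀ (r : Fin n → R) (j : Fin n), (r j : A) * x j ∈ 𝒜 i := fun r j => by
    have := SetLike.mul_mem_graded (r j).2 (hx j)
    rwa [zero_add] at this
  let f : 𝒜 i →ₗ[R] (Fin n → R) :=
    { toFun := fun a j => ⟨y j * a, hmem j a⟩
      map_add' := fun a b => by
        funext j
        exact Subtype.ext (by simp [mul_add])
      map_smul' := fun c a => by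
        funext j
        refine Subtype.ext ?_
        rw [RingHom.id_apply]
        show y j * ((c • a : 𝒜 i) : A) = ((c • _ : R) : A)
        rw [hsmul, hcoe]
        ring }
  let g : (Fin n → R) →ₗ[R] (𝒜 i) :=
    { toFun := fun r => ⟨∑ j, (r j : A) * x j, sum_mem fun j _ => hmem' r j⟩
      map_add' := fun r s => by
        refine Subtype.ext ?_
        show ∑ j, (((r + s) j : A)) * x j = _
        push_cast [Pi.add_apply]
        rw [← Finset.sum_add_distrib]
        exact Finset.sum_congr rfl fun j _ => by ring
      map_smul' := fun c r => by
        refine Subtype.ext ?_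
        rw [RingHom.id_apply, hsmul]
        push_cast
        rw [Finset.mul_sum]
        refine Finset.sum_congr rfl fun j _ => ?_
        rw [Pi.smul_apply, hcoe]
        ring }
  have hgf : g.comp f = LinearMap.id := by
    ext a
    show (∑ j, (y j * (a : A)) * x j) = (a : A)
    calc ∑ j, (y j * (a : A)) * x j = ∑ j, (a : A) * (x j * y j) := by
          refine Finset.sum_congr rfl fun j _ => by ring
      _ = (a : A) * ∑ j, x j * y j := by rw [Finset.mul_sum]
      _ = (a : A) := by rw [hsum, mul_one]
  constructor
  · exact Module.Finite.of_surjective g fun a =>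
      ⟨f a, by have := congrFun (congrArg DFunLike.coe hgf) a; exact this⟩
  · exact Module.Projective.of_split f g hgf

variable (𝒜)

set_option synthInstance.maxHeartbeats 1000000 in
/-- The decomposition of `A` into its graded pieces, as an `𝒜 0`-linear equivalence. -/
noncomputable def decomposeLinear' : A ≃ₗ[𝒜 (0 : ZMod p)] (DirectSum (ZMod p) fun i => 𝒜 i) :=
  { DirectSum.decomposeAddEquiv 𝒜 with
    map_smul' := fun r a => by
      refine DFinsupp.ext fun i => ?_
      refine Subtype.ext ?_
      show ((DirectSum.decompose 𝒜 ((r : A) * a) i : A)) = _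
      have h1 : ((DirectSum.decompose 𝒜 ((r : A) * a) ((0 : ZMod p) + i) : A))
          = (r : A) * (DirectSum.decompose 𝒜 a i : A) :=
        DirectSum.coe_decompose_mul_add_of_left_mem 𝒜 r.2
      rw [zero_add] at h1
      rw [h1]
      rfl }

set_option synthInstance.maxHeartbeats 1000000 in
lemma decompose_zero_smul' (r : 𝒜 (0 : ZMod p)) (a : A) :
    DirectSum.decompose 𝒜 ((r : A) * a) (0 : ZMod p)
      = r • DirectSum.decompose 𝒜 a (0 : ZMod p) := by
  have := congrArg (fun d : DirectSum (ZMod p) fun i => 𝒜 i => d (0 : ZMod p))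
    ((decomposeLinear' 𝒜).map_smul r a)
  exact this

end AuxGraded


/-- If `𝒜 i · 𝒜 (p-i) = 𝒜 0` for each `i = 1, …, p-1`, then each component `𝒜 i` is a
finitely generated projective `𝒜 0`-module and `A` is a faithfully flat `𝒜 0`-module. -/
theorem graded_components_projective_and_faithfully_flat
    {A : Type*} [CommRing A] {p : ℕ} (hp : p.Prime)
    (𝒜 : ZMod p → Submodule ℤ A) [GradedRing 𝒜]
    (h : ∀ i ∈ Finset.Icc 1 (p - 1),
      𝒜 (i : ZMod p) * 𝒜 ((p - i : ℕ) : ZMod p) = 𝒜 (0 : ZMod p)) :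
    (∀ i : ZMod p,
      Module.Finite (𝒜 (0 : ZMod p)) (𝒜 i) ∧ Module.Projective (𝒜 (0 : ZMod p)) (𝒜 i)) ∧
    Module.FaithfullyFlat (𝒜 (0 : ZMod p)) A := by
  haveI : NeZero p := ⟨hp.ne_zero⟩
  have key : ∀ i : ZMod p, ∃ (n : ℕ) (x y : Fin n → A),
      (∀ j, x j ∈ 𝒜 i) ∧ (∀ j, y j ∈ 𝒜 (-i)) ∧ ∑ j, x j * y j = 1 := by
    intro i
    by_cases hi : i = 0
    · subst hi
      refine ⟨1, fun _ => 1, fun _ => 1, fun _ => SetLike.one_mem_graded 𝒜, fun _ => ?_, by simp⟩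
      rw [neg_zero]
      exact SetLike.one_mem_graded 𝒜
    · have hval1 : 1 ≤ i.val := Nat.one_le_iff_ne_zero.mpr fun h0 => hi ((ZMod.val_eq_zero i).mp h0)
      have hval2 : i.val ≤ p - 1 := Nat.le_sub_one_of_lt (ZMod.val_lt i)
      have heq := h i.val (Finset.mem_Icc.mpr ⟨hval1, hval2⟩)
      have hcast1 : ((i.val : ℕ) : ZMod p) = i := ZMod.natCast_zmod_val i
      have hcast2 : ((p - i.val : ℕ) : ZMod p) = -i := by
        have hle : i.val ≤ p := (ZMod.val_lt i).le
        push_cast [Nat.cast_sub hle]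
        rw [ZMod.natCast_self, hcast1]
        ring
      rw [hcast1, hcast2] at heq
      have h1 : (1 : A) ∈ 𝒜 i * 𝒜 (-i) := heq ▸ SetLike.one_mem_graded 𝒜
      exact exists_dual_family' _ _ h1
  have hfp : ∀ i : ZMod p,
      Module.Finite (𝒜 (0 : ZMod p)) (𝒜 i) ∧ Module.Projective (𝒜 (0 : ZMod p)) (𝒜 i) := by
    intro i
    obtain ⟨n, x, y, hx, hy, hs⟩ := key i
    exact finite_projective_of_dual' i n x y hx hy hs
  refine ⟨hfp, ?_⟩
  haveI : ∀ i : ZMod p, Module.Projective (𝒜 (0 : ZMod p)) (𝒜 i) := fun i => (hfp i).2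
  haveI : ∀ i : ZMod p, Module.Flat (𝒜 (0 : ZMod p)) (𝒜 i) := fun i => inferInstance
  haveI flatA : Module.Flat (𝒜 (0 : ZMod p)) A :=
    Module.Flat.of_linearEquiv (decomposeLinear' 𝒜)
  refine { toFlat := flatA, submodule_ne_top := fun m hm heq => ?_ }
  have h1 : (1 : A) ∈ m • (⊤ : Submodule (𝒜 (0 : ZMod p)) A) := by rw [heq]; trivial
  have claim : ∀ a ∈ m • (⊤ : Submodule (𝒜 (0 : ZMod p)) A),
      DirectSum.decompose 𝒜 a (0 : ZMod p) ∈ m := by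
    intro a ha
    refine Submodule.smul_induction_on ha ?_ ?_
    · intro r hr b _
      have hrb : r • b = (r : A) * b := rfl
      rw [hrb, decompose_zero_smul' 𝒜 r b]
      have : r • DirectSum.decompose 𝒜 b (0 : ZMod p)
          = r * DirectSum.decompose 𝒜 b (0 : ZMod p) := rfl
      rw [this]
      exact Ideal.mul_mem_right _ m hr
    · intro a b ha hb
      rw [DirectSum.decompose_add, DirectSum.add_apply]
      exact m.add_mem ha hb
  have h2 := claim 1 h1
  have h3 : DirectSum.decompose 𝒜 (1 : A) (0 : ZMod p) = 1 :=
    Subtype.ext (DirectSum.decompose_of_mem_same 𝒜 (SetLike.one_mem_graded 𝒜))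
  rw [h3] at h2
  exact hm.ne_top ((Ideal.eq_top_iff_one m).mpr h2)
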